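/- For integers n, L, k with L ≥ 0, k ≥ 1, and L + k ≤ n, ∑_{m=0}^{n-L-k} C(n-L-k, m) / C(n-1, L+m) = (n/k) · C(L+k, k)^{-1}. -/

import Mathlib

open Finset

lemma inv_choose_split (n j : ℕ) (hj : j ≤ n) :
    ((Nat.choose n j : ℝ))⁻¹ =
      ((n:ℝ)+1)/((n:ℝ)+2) * (((Nat.choose (n+1) j : ℝ))⁻¹ + ((Nat.choose (n+1) (j+1) : ℝ))⁻¹) := by
  have ha : (Nat.choose n j : ℝ) ≠ 0 := Nat.cast_ne_zero.mpr (Nat.choose_pos hj).ne'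
  have hb : (Nat.choose (n+1) j : ℝ) ≠ 0 :=
    Nat.cast_ne_zero.mpr (Nat.choose_pos (by omega)).ne'
  have hc : (Nat.choose (n+1) (j+1) : ℝ) ≠ 0 :=
    Nat.cast_ne_zero.mpr (Nat.choose_pos (by omega)).ne'
  have h1 : ((n:ℝ)+1) * (Nat.choose n j : ℝ) = (Nat.choose (n+1) (j+1) : ℝ) * ((j:ℝ)+1) := by
    exact_mod_cast congrArg (Nat.cast (R := ℝ)) (Nat.add_one_mul_choose_eq n j)
  have h2 : (Nat.choose n j : ℝ) * ((n:ℝ)+1) = (Nat.choose (n+1) j : ℝ) * (((n+1-j : ℕ) : ℝ)) := by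
    exact_mod_cast congrArg (Nat.cast (R := ℝ)) (Nat.choose_mul_succ_eq n j)
  have h3 : ((n+1-j : ℕ) : ℝ) = (n:ℝ)+1-(j:ℝ) := by
    push_cast [Nat.cast_sub (by omega : j ≤ n+1)]
    ring
  rw [h3] at h2
  field_simp
  nlinarith [h1, h2]

lemma aux_sum (L k' : ℕ) : ∀ N : ℕ,
    ∑ m ∈ Finset.range (N+1),
        (Nat.choose N m : ℝ) / (Nat.choose (N+L+k') (L+m) : ℝ)
      = ((N:ℝ)+(L:ℝ)+(k':ℝ)+1) / (((k':ℝ)+1) * (Nat.choose (L+(k'+1)) (k'+1) : ℝ)) := by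
  intro N
  induction N with
  | zero =>
    simp only [Finset.sum_range_one, Nat.choose_zero_right, Nat.cast_one, Nat.zero_add,
      Nat.cast_zero, zero_add, add_zero]
    have h1 := Nat.add_one_mul_choose_eq (L+k') k'
    have hsym : Nat.choose (L+k') L = Nat.choose (L+k') k' := by
      have := Nat.choose_symm (Nat.le_add_left k' L)
      simpa [Nat.add_sub_cancel] using this
    have h1' : ((L:ℝ)+(k':ℝ)+1) * (Nat.choose (L+k') k' : ℝ)
        = (Nat.choose (L+k'+1) (k'+1) : ℝ) * ((k':ℝ)+1) := by
      exact_mod_cast congrArg (Nat.cast (R := ℝ)) h1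
    have ha : (Nat.choose (L+k') L : ℝ) ≠ 0 :=
      Nat.cast_ne_zero.mpr (Nat.choose_pos (by omega)).ne'
    have hb : (Nat.choose (L+(k'+1)) (k'+1) : ℝ) ≠ 0 :=
      Nat.cast_ne_zero.mpr (Nat.choose_pos (by omega)).ne'
    have hLk : ((Nat.choose (L+(k'+1)) (k'+1) : ℕ) : ℝ) = (Nat.choose (L+k'+1) (k'+1) : ℝ) := by
      norm_num [Nat.add_assoc]
    rw [hsym] at ha ⊢
    field_simp
    rw [hLk] at hb ⊢
    nlinarith [h1']
  | succ N ih =>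
    have hnn : N+1+L+k' = N+L+k'+1 := by omega
    rw [hnn]
    have step1 : ∑ m ∈ Finset.range (N+1+1),
          (Nat.choose (N+1) m : ℝ) / (Nat.choose (N+L+k'+1) (L+m) : ℝ)
        = ∑ m ∈ Finset.range (N+1), (Nat.choose N m : ℝ) *
            (((Nat.choose (N+L+k'+1) (L+m) : ℝ))⁻¹ + ((Nat.choose (N+L+k'+1) (L+m+1) : ℝ))⁻¹) := by
      rw [Finset.sum_range_succ']
      have e1 : ∀ m ∈ Finset.range (N+1),
          (Nat.choose (N+1) (m+1) : ℝ) / (Nat.choose (N+L+k'+1) (L+(m+1)) : ℝ)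
          = (Nat.choose N m : ℝ) / (Nat.choose (N+L+k'+1) (L+m+1) : ℝ)
            + (Nat.choose N (m+1) : ℝ) / (Nat.choose (N+L+k'+1) (L+m+1) : ℝ) := by
        intro m _
        rw [Nat.choose_succ_succ]
        push_cast
        rw [add_div]
        rfl
      rw [Finset.sum_congr rfl e1, Finset.sum_add_distrib]
      have e2 : ∑ m ∈ Finset.range (N+1),
            (Nat.choose N (m+1) : ℝ) / (Nat.choose (N+L+k'+1) (L+m+1) : ℝ)
          = ∑ m ∈ Finset.range (N+1),
              (Nat.choose N m : ℝ) / (Nat.choose (N+L+k'+1) (L+m) : ℝ)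
            - (Nat.choose (N+1) 0 : ℝ) / (Nat.choose (N+L+k'+1) (L+0) : ℝ) := by
        rw [eq_sub_iff_add_eq]
        have hA := Finset.sum_range_succ'
          (fun m => (Nat.choose N m : ℝ) / (Nat.choose (N+L+k'+1) (L+m) : ℝ)) (N+1)
        have hB := Finset.sum_range_succ
          (fun m => (Nat.choose N m : ℝ) / (Nat.choose (N+L+k'+1) (L+m) : ℝ)) (N+1)
        rw [hB] at hA
        simp only [Nat.choose_succ_self, Nat.cast_zero, zero_div, add_zero,
          Nat.choose_zero_right, Nat.cast_one] at hA ⊢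
        exact hA.symm
      rw [e2]
      have e3 : ∀ m ∈ Finset.range (N+1),
          (Nat.choose N m : ℝ) *
            (((Nat.choose (N+L+k'+1) (L+m) : ℝ))⁻¹ + ((Nat.choose (N+L+k'+1) (L+m+1) : ℝ))⁻¹)
          = (Nat.choose N m : ℝ) / (Nat.choose (N+L+k'+1) (L+m) : ℝ)
            + (Nat.choose N m : ℝ) / (Nat.choose (N+L+k'+1) (L+m+1) : ℝ) := by
        intro m _
        rw [mul_add, div_eq_mul_inv, div_eq_mul_inv]
      rw [Finset.sum_congr rfl e3, Finset.sum_add_distrib]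
      ring
    rw [step1]
    have hkey : ∀ m ∈ Finset.range (N+1),
        (Nat.choose N m : ℝ) *
          (((Nat.choose (N+L+k'+1) (L+m) : ℝ))⁻¹ + ((Nat.choose (N+L+k'+1) (L+m+1) : ℝ))⁻¹)
        = (((N:ℝ)+(L:ℝ)+(k':ℝ)+2)/((N:ℝ)+(L:ℝ)+(k':ℝ)+1)) *
            ((Nat.choose N m : ℝ) / (Nat.choose (N+L+k') (L+m) : ℝ)) := by
      intro m hm
      have hm' : L + m ≤ N+L+k' := by
        simp only [Finset.mem_range] at hm; omega
      have hs := inv_choose_split (N+L+k') (L+m) hm'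
      have hcast : ((N+L+k' : ℕ) : ℝ) = (N:ℝ)+(L:ℝ)+(k':ℝ) := by push_cast; ring
      rw [hcast] at hs
      have h1 : (N:ℝ)+(L:ℝ)+(k':ℝ)+1 ≠ 0 := by positivity
      have h2 : (N:ℝ)+(L:ℝ)+(k':ℝ)+2 ≠ 0 := by positivity
      have hs2 : ((Nat.choose (N+L+k'+1) (L+m) : ℝ))⁻¹ + ((Nat.choose (N+L+k'+1) (L+m+1) : ℝ))⁻¹
          = (((N:ℝ)+(L:ℝ)+(k':ℝ)+2)/((N:ℝ)+(L:ℝ)+(k':ℝ)+1)) * ((Nat.choose (N+L+k') (L+m) : ℝ))⁻¹ := by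
        rw [hs]
        field_simp
      rw [hs2, div_eq_mul_inv]
      ring
    rw [Finset.sum_congr rfl hkey, ← Finset.mul_sum, ih]
    have h1 : (N:ℝ)+(L:ℝ)+(k':ℝ)+1 ≠ 0 := by positivity
    have hb : (Nat.choose (L+(k'+1)) (k'+1) : ℝ) ≠ 0 :=
      Nat.cast_ne_zero.mpr (Nat.choose_pos (by omega)).ne'
    have hk1 : (k':ℝ)+1 ≠ 0 := by positivity
    push_cast
    field_simp
    ring

theorem binom_sum_identity_shapley_taylor (n L k : ℕ) (hk : 1 ≤ k) (h : L + k ≤ n) :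
    ∑ m ∈ Finset.range (n - L - k + 1),
        (Nat.choose (n - L - k) m : ℝ) / (Nat.choose (n - 1) (L + m) : ℝ)
      = ((n : ℝ) / (k : ℝ)) * ((Nat.choose (L + k) k : ℝ))⁻¹ := by
  have e1 : n - 1 = (n - L - k) + L + (k - 1) := by omega
  rw [e1, aux_sum L (k-1) (n-L-k)]
  have e2 : L + (k - 1 + 1) = L + k := by omega
  rw [e2]
  have c1 : ((n - L - k : ℕ):ℝ) = (n:ℝ) - (L:ℝ) - (k:ℝ) := by
    rw [Nat.sub_sub]
    push_cast [Nat.cast_sub h]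
    ring
  have c2 : ((k - 1 : ℕ):ℝ) = (k:ℝ) - 1 := by
    push_cast [Nat.cast_sub hk]
    ring
  rw [c1, c2]
  have hk0 : (k:ℝ) ≠ 0 := by
    exact_mod_cast (by omega : k ≠ 0)
  have hC : (Nat.choose (L+k) k : ℝ) ≠ 0 :=
    Nat.cast_ne_zero.mpr (Nat.choose_pos (by omega)).ne'
  rw [Nat.sub_add_cancel hk]
  field_simp
  rw [sub_add_cancel, mul_div_cancel_left₀ _ hk0]
  ring
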